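/- Suppose β(X,Y) := −tr_𝔤(ad X ∘ ad Y) is positive definite on 𝔪, and suppose there exists a nonzero vector v ∈ 𝔪 fixed by the isotropy representation, i.e. [W,v] = 0 for all W ∈ 𝔥. If for some t ∈ ℝ the Ricci tensor of the connection Λ^t vanishes on v, i.e. Ric^t(v,v) := Σ_i ⟨R^t(v,Z_i)Z_i, v⟩ = 0, then t = 0 or t = 1. In particular, only the canonical connection (t = 0) and the anticanonical connection (t = 1) can be Ricci-flat. -/
import Mathlib


open scoped BigOperators

/-- Curvature `R^t(X,Y)Z` of the connection `Λ^t(X)Y = t[X,Y]_𝔪`. -/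
noncomputable def curvRt {𝔤 : Type*} [LieRing 𝔤] [LieAlgebra ℝ 𝔤]
    (p𝔥 p𝔪 : 𝔤 →ₗ[ℝ] 𝔤) (t : ℝ) (x y z : 𝔤) : 𝔤 :=
  t • p𝔪 ⁅x, t • p𝔪 ⁅y, z⁆⁆ - t • p𝔪 ⁅y, t • p𝔪 ⁅x, z⁆⁆
    - t • p𝔪 ⁅p𝔪 ⁅x, y⁆, z⁆ - ⁅p𝔥 ⁅x, y⁆, z⁆

/-- If `β(X,Y) = −tr_𝔤(ad X ∘ ad Y)` is positive definite on `𝔪` and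
`v ∈ 𝔪` is a nonzero vector fixed by the isotropy representation (`[𝔥,v] = 0`), then
`Ric^t(v,v) = 0` forces `t = 0` or `t = 1`: only the canonical and anticanonical
connections can be Ricci-flat. -/
theorem stmt17
    {𝔤 : Type*} [LieRing 𝔤] [LieAlgebra ℝ 𝔤] [FiniteDimensional ℝ 𝔤]
    (𝔥 𝔪 : Submodule ℝ 𝔤)
    (p𝔥 p𝔪 : 𝔤 →ₗ[ℝ] 𝔤)
    (hsum : ∀ x, p𝔥 x + p𝔪 x = x)
    (hmem𝔥 : ∀ x, p𝔥 x ∈ 𝔥) (hmem𝔪 : ∀ x, p𝔪 x ∈ 𝔪)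
    (hid𝔥 : ∀ x ∈ 𝔥, p𝔥 x = x) (hid𝔪 : ∀ x ∈ 𝔪, p𝔪 x = x)
    (hsub : ∀ x ∈ 𝔥, ∀ y ∈ 𝔥, ⁅x, y⁆ ∈ 𝔥)
    (hhm : ∀ x ∈ 𝔥, ∀ y ∈ 𝔪, ⁅x, y⁆ ∈ 𝔪)
    (Q : LinearMap.BilinForm ℝ 𝔤)
    (hQsymm : ∀ x y, Q x y = Q y x)
    (hQinv : ∀ w u v : 𝔤, Q ⁅w, u⁆ v + Q u ⁅w, v⁆ = 0)
    (hQ𝔥𝔪 : ∀ x ∈ 𝔥, ∀ y ∈ 𝔪, Q x y = 0)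
    (hQpos𝔪 : ∀ x ∈ 𝔪, x ≠ 0 → 0 < Q x x)
    (hQ𝔥nd : ∀ x ∈ 𝔥, (∀ y ∈ 𝔥, Q x y = 0) → x = 0)
    {n : ℕ} (Z : Fin n → 𝔤) (hZ𝔪 : ∀ i, Z i ∈ 𝔪)
    (hZon : ∀ i j, Q (Z i) (Z j) = if i = j then 1 else 0)
    (hZspan : Submodule.span ℝ (Set.range Z) = 𝔪)
    (hβpos : ∀ x ∈ 𝔪, x ≠ 0 →
      0 < -(LinearMap.trace ℝ 𝔤 ((LieAlgebra.ad ℝ 𝔤 x) ∘ₗ (LieAlgebra.ad ℝ 𝔤 x))))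
    (v : 𝔤) (hv𝔪 : v ∈ 𝔪) (hv0 : v ≠ 0)
    (hfix : ∀ w ∈ 𝔥, ⁅w, v⁆ = 0)
    (t : ℝ)
    (hric : ∑ i, Q (curvRt p𝔥 p𝔪 t v (Z i) (Z i)) v = 0) :
    t = 0 ∨ t = 1 := by
  classical
  -- v commutes with 𝔥 in both orders
  have hvh : ∀ h ∈ 𝔥, ⁅v, h⁆ = 0 := by
    intro h hh
    rw [← lie_skew, hfix h hh, neg_zero]
  -- 𝔥-component of ⁅v, Z i⁆ vanishes
  have hph : ∀ i, p𝔥 ⁅v, Z i⁆ = 0 := by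
    intro i
    apply hQ𝔥nd _ (hmem𝔥 _)
    intro y hy
    have h1 : Q ⁅v, Z i⁆ y = 0 := by
      have h2 := hQinv v (Z i) y
      rw [hvh y hy] at h2
      simpa using h2
    have h2 : Q (p𝔪 ⁅v, Z i⁆) y = 0 := by
      rw [hQsymm]; exact hQ𝔥𝔪 y hy _ (hmem𝔪 _)
    have h3 : Q (p𝔥 ⁅v, Z i⁆) y + Q (p𝔪 ⁅v, Z i⁆) y = Q ⁅v, Z i⁆ y := by
      rw [← LinearMap.add_apply, ← map_add, hsum]
    rw [h1, h2, add_zero] at h3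
    exact h3
  have hpm : ∀ i, p𝔪 ⁅v, Z i⁆ = ⁅v, Z i⁆ := by
    intro i
    have := hsum ⁅v, Z i⁆
    rw [hph i, zero_add] at this
    exact this
  -- simplify the curvature
  have hcurv : ∀ i, curvRt p𝔥 p𝔪 t v (Z i) (Z i)
      = (t - t ^ 2) • p𝔪 ⁅Z i, ⁅v, Z i⁆⁆ := by
    intro i
    unfold curvRt
    rw [lie_self, map_zero, smul_zero, lie_zero, map_zero, smul_zero,
      hpm i, hph i, zero_lie, lie_smul, map_smul]
    have hskew : ⁅⁅v, Z i⁆, Z i⁆ = -⁅Z i, ⁅v, Z i⁆⁆ := (lie_skew _ _).symm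
    rw [hskew, map_neg]
    module
  -- pair with v
  have hQterm : ∀ i, Q (curvRt p𝔥 p𝔪 t v (Z i) (Z i)) v
      = (t - t ^ 2) * Q ⁅v, Z i⁆ ⁅v, Z i⁆ := by
    intro i
    rw [hcurv i, map_smul, LinearMap.smul_apply, smul_eq_mul]
    congr 1
    have e0 : Q (p𝔥 ⁅Z i, ⁅v, Z i⁆⁆) v = 0 := hQ𝔥𝔪 _ (hmem𝔥 _) v hv𝔪
    have e1 : Q (p𝔪 ⁅Z i, ⁅v, Z i⁆⁆) v = Q ⁅Z i, ⁅v, Z i⁆⁆ v := by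
      have h3 : Q (p𝔥 ⁅Z i, ⁅v, Z i⁆⁆) v + Q (p𝔪 ⁅Z i, ⁅v, Z i⁆⁆) v
          = Q ⁅Z i, ⁅v, Z i⁆⁆ v := by
        rw [← LinearMap.add_apply, ← map_add, hsum]
      rw [e0, zero_add] at h3
      exact h3
    have e2 : Q ⁅Z i, ⁅v, Z i⁆⁆ v = Q ⁅v, Z i⁆ ⁅v, Z i⁆ := by
      have h4 := hQinv (Z i) ⁅v, Z i⁆ v
      have h5 : ⁅Z i, v⁆ = -⁅v, Z i⁆ := (lie_skew _ _).symm
      rw [h5, map_neg] at h4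
      linarith
    rw [e1, e2]
  -- the Ricci sum
  have hsumQ : (t - t ^ 2) * (∑ i, Q ⁅v, Z i⁆ ⁅v, Z i⁆) = 0 := by
    rw [Finset.mul_sum, ← hric]
    exact Finset.sum_congr rfl fun i _ => (hQterm i).symm
  -- nonnegativity of each term
  have hnn : ∀ x ∈ 𝔪, 0 ≤ Q x x := by
    intro x hx
    by_cases hx0 : x = 0
    · simp [hx0]
    · exact le_of_lt (hQpos𝔪 x hx hx0)
  have hmemw : ∀ i, ⁅v, Z i⁆ ∈ 𝔪 := by
    intro i
    rw [← hpm i]; exact hmem𝔪 _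
  -- positivity of the sum
  have hSpos : 0 < ∑ i, Q ⁅v, Z i⁆ ⁅v, Z i⁆ := by
    rcases lt_or_eq_of_le (Finset.sum_nonneg fun i _ => hnn _ (hmemw i)) with h | h
    · exact h
    · -- sum is zero: every bracket vanishes, so ad v = 0, contradicting β-positivity
      exfalso
      have hz : ∀ i ∈ Finset.univ, Q ⁅v, Z i⁆ ⁅v, Z i⁆ = 0 :=
        (Finset.sum_eq_zero_iff_of_nonneg fun i _ => hnn _ (hmemw i)).mp h.symm
      have hw0 : ∀ i, ⁅v, Z i⁆ = 0 := by
        intro i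
        by_contra hne
        exact absurd (hz i (Finset.mem_univ i)) (ne_of_gt (hQpos𝔪 _ (hmemw i) hne))
      have hadv : LieAlgebra.ad ℝ 𝔤 v = 0 := by
        apply LinearMap.ext
        intro x
        have hker : 𝔪 ≤ LinearMap.ker (LieAlgebra.ad ℝ 𝔤 v) := by
          rw [← hZspan, Submodule.span_le]
          rintro _ ⟨i, rfl⟩
          simpa [LinearMap.mem_ker, LieAlgebra.ad_apply] using hw0 i
        have h1 : ⁅v, p𝔥 x⁆ = 0 := hvh _ (hmem𝔥 x)
        have h2 : ⁅v, p𝔪 x⁆ = 0 := by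
          simpa [LinearMap.mem_ker, LieAlgebra.ad_apply] using hker (hmem𝔪 x)
        have : ⁅v, x⁆ = 0 := by
          rw [← hsum x, lie_add, h1, h2, add_zero]
        simpa [LieAlgebra.ad_apply] using this
      have := hβpos v hv𝔪 hv0
      rw [hadv] at this
      simp at this
  -- conclude
  have hfac : t - t ^ 2 = 0 := by
    rcases mul_eq_zero.mp hsumQ with h | h
    · exact h
    · exact absurd h (ne_of_gt hSpos)
  have : t * (1 - t) = 0 := by ring_nf; linarith [hfac]
  rcases mul_eq_zero.mp this with h | h
  · exact Or.inl h
  · right; linarith
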